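/- arXiv:1511.01616 — 2 statements merged into one kernel-verified Lean document; each statement's English description precedes it below -/
import Mathlib

section
/- Let q be a prime power and let t be a positive divisor of q² − 1. Then for all integers r, s with 1 ≤ r ≤ (q²−1)/t and 1 ≤ s ≤ (t−1)/(q+1), and for each of the two lengths n = rt and n = rt + 1, there exists a linear code C over 𝔽_{q²} of length n, dimension n − s, and minimum distance s + 1, such that C^{⊥H} ⊆ C. -/
/-- Hamming weight: the number of nonzero coordinates. -/
noncomputable def wt {F : Type*} [Zero F] {n : ℕ} (x : Fin n → F) : ℕ :=
  Set.ncard {i | x i ≠ 0}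

/-- The Hermitian dual code of a linear code C ⊆ (F_{q²})^n. -/
noncomputable def dualH {F : Type*} [Field F] (q n : ℕ) (C : Submodule F (Fin n → F)) :
    Submodule F (Fin n → F) where
  carrier := {x | ∀ y ∈ C, ∑ i, x i * (y i) ^ q = 0}
  add_mem' := by
    intro a b ha hb y hy
    simp only [Set.mem_setOf_eq] at *
    simp [add_mul, Finset.sum_add_distrib, ha y hy, hb y hy]
  zero_mem' := by
    intro y hy; simp
  smul_mem' := by
    intro c x hx y hy
    simp only [Set.mem_setOf_eq] at *
    simp [smul_eq_mul, mul_assoc, ← Finset.mul_sum, hx y hy]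


open Finset in
private lemma wt_eq_card {F : Type*} [Zero F] {n : ℕ} (x : Fin n → F)
    [DecidablePred fun i => x i ≠ 0] :
    wt x = (Finset.univ.filter fun i => x i ≠ 0).card := by
  rw [wt, Set.ncard_eq_toFinset_card', Set.toFinset_setOf]

open Finset Polynomial in
private lemma key_indep {F : Type*} [Field F] {n s : ℕ} (α v : Fin n → F)
    (hα : Function.Injective α) (hv : ∀ i, v i ≠ 0) (x : Fin n → F)
    (hx : ∀ j : ℕ, j < s → ∑ i, v i * α i ^ j * x i = 0)
    (hcard : wt x ≤ s) : x = 0 := by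
  classical
  rw [wt_eq_card] at hcard
  set T := (Finset.univ.filter fun i => x i ≠ 0) with hT
  funext i₀
  simp only [Pi.zero_apply]
  by_contra h0
  have hi₀ : i₀ ∈ T := by simp [hT, h0]
  have hs1 : 1 ≤ s := le_trans (Finset.card_pos.mpr ⟨i₀, hi₀⟩) hcard
  set P : F[X] := ∏ i' ∈ T.erase i₀, (X - C (α i')) with hP
  have hdeg : P.natDegree < s := by
    rw [hP, natDegree_prod _ _ (fun i _ => X_sub_C_ne_zero (α i))]
    simp only [natDegree_X_sub_C, Finset.sum_const, smul_eq_mul, mul_one]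
    have := Finset.card_erase_of_mem hi₀
    omega
  have heval0 : ∀ i ∈ T.erase i₀, P.eval (α i) = 0 := by
    intro i hi
    rw [hP, eval_prod]
    exact Finset.prod_eq_zero hi (by simp)
  have hzero : ∑ i, v i * x i * P.eval (α i) = 0 := by
    have : ∀ i, v i * x i * P.eval (α i)
        = ∑ j ∈ range s, P.coeff j * (v i * α i ^ j * x i) := by
      intro i
      rw [eval_eq_sum_range' hdeg, Finset.mul_sum]
      apply Finset.sum_congr rfl
      intro j _; ring
    simp_rw [this]
    rw [Finset.sum_comm]
    apply Finset.sum_eq_zero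
    intro j hj
    rw [← Finset.mul_sum, hx j (Finset.mem_range.mp hj), mul_zero]
  have hsingle : ∑ i, v i * x i * P.eval (α i) = v i₀ * x i₀ * P.eval (α i₀) := by
    apply Finset.sum_eq_single_of_mem i₀ (Finset.mem_univ i₀)
    intro i _ hne
    by_cases hxi : x i = 0
    · rw [hxi]; ring
    · rw [heval0 i (Finset.mem_erase.mpr ⟨hne, by simp [hT, hxi]⟩), mul_zero]
  have hevalne : P.eval (α i₀) ≠ 0 := by
    rw [hP, eval_prod]
    apply Finset.prod_ne_zero_iff.mpr
    intro i hi
    simp only [eval_sub, eval_X, eval_C]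
    exact sub_ne_zero.mpr fun h => (Finset.mem_erase.mp hi).1 (hα h).symm
  rw [hzero] at hsingle
  exact h0 (by
    rcases mul_eq_zero.mp hsingle.symm with h | h
    · rcases mul_eq_zero.mp h with h | h
      · exact absurd h (hv i₀)
      · exact h
    · exact absurd h hevalne)


open Finset in
private lemma sum_extend {F : Type*} [Field F] {n m : ℕ} (hmn : m ≤ n)
    (g : Fin n → F) (c : Fin m → F) :
    ∑ i, g i * (if h : (i : ℕ) < m then c ⟨i, h⟩ else 0)
      = ∑ i' : Fin m, g (Fin.castLE hmn i') * c i' := by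
  classical
  have h1 : ∑ i ∈ Finset.univ.map (Fin.castLEEmb hmn),
      (g i * (if h : (i : ℕ) < m then c ⟨i, h⟩ else 0))
      = ∑ i, g i * (if h : (i : ℕ) < m then c ⟨i, h⟩ else 0) := by
    apply Finset.sum_subset (Finset.subset_univ _)
    intro i _ hi
    have hlt : ¬ ((i : ℕ) < m) := fun hlt =>
      hi (Finset.mem_map.mpr ⟨⟨i, hlt⟩, Finset.mem_univ _, by
        simp [Fin.castLEEmb, Fin.castLE]⟩)
    simp [hlt]
  rw [← h1, Finset.sum_map]
  apply Finset.sum_congr rfl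
  intro i' _
  have : ((Fin.castLEEmb hmn i' : Fin n) : ℕ) < m := by
    simp [Fin.castLEEmb, Fin.castLE, i'.2]
  rw [dif_pos this]
  have h2 : (⟨((Fin.castLEEmb hmn i' : Fin n) : ℕ), this⟩ : Fin m) = i' := by
    apply Fin.ext; simp [Fin.castLEEmb, Fin.castLE]
  rw [h2]
  rfl

open Finset Matrix in
private lemma construction (q n s : ℕ) {F : Type*} [Field F] [Fintype F]
    (hF : Fintype.card F = q ^ 2) (hsn : s + 1 ≤ n)
    (α v : Fin n → F) (hα : Function.Injective α) (hv : ∀ i, v i ≠ 0)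
    (hherm : ∀ j k : ℕ, j < s → k < s → ∑ i, v i ^ (q + 1) * α i ^ (j * q + k) = 0) :
    ∃ C : Submodule F (Fin n → F), dualH q n C ≤ C ∧
      Module.finrank F C = n - s ∧
      IsLeast {d : ℕ | ∃ x ∈ C, x ≠ 0 ∧ wt x = d} (s + 1) := by
  classical
  set Φ : (Fin n → F) →ₗ[F] (Fin s → F) :=
  { toFun := fun x j => ∑ i, v i * α i ^ (j : ℕ) * x i
    map_add' := by
      intro a b; funext j
      simp only [Pi.add_apply, mul_add, Finset.sum_add_distrib]
    map_smul' := by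
      intro c a; funext j
      simp only [Pi.smul_apply, smul_eq_mul, RingHom.id_apply, Finset.mul_sum]
      apply Finset.sum_congr rfl
      intro i _; ring } with hΦ
  have hΦapp : ∀ (x : Fin n → F) (j : Fin s),
      Φ x j = ∑ i, v i * α i ^ (j : ℕ) * x i := fun x j => rfl
  have hmemC : ∀ x : Fin n → F, x ∈ LinearMap.ker Φ ↔
      ∀ j : ℕ, j < s → ∑ i, v i * α i ^ j * x i = 0 := by
    intro x
    rw [LinearMap.mem_ker, funext_iff]
    constructor
    · intro h j hj; exact h ⟨j, hj⟩
    · intro h j; exact h j j.2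
  refine ⟨LinearMap.ker Φ, ?_, ?_, ?_⟩
  · -- dual containing
    intro x hx
    have hx' : ∀ y ∈ LinearMap.ker Φ, ∑ i, x i * (y i) ^ q = 0 := hx
    rw [hmemC]
    intro k hk
    have hy : (fun i => (v i * α i ^ k) ^ q) ∈ LinearMap.ker Φ := by
      rw [hmemC]
      intro j hj
      have h2 : ∀ i, v i * α i ^ j * (v i * α i ^ k) ^ q
          = v i ^ (q + 1) * α i ^ (k * q + j) := by
        intro i
        rw [mul_pow, ← pow_mul, pow_add, pow_add, pow_one]
        ring
      simp_rw [h2]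
      exact hherm k j hk hj
    have h3 := hx' _ hy
    have h4 : ∀ i, x i * ((v i * α i ^ k) ^ q) ^ q = v i * α i ^ k * x i := by
      intro i
      rw [← pow_mul, ← pow_two, ← hF, FiniteField.pow_card]
      ring
    simp_rw [h4] at h3
    exact h3
  · -- finrank
    have hs_le : s ≤ n := le_trans (Nat.le_succ s) hsn
    set M : Matrix (Fin s) (Fin s) F :=
      fun j i => v (Fin.castLE hs_le i) * α (Fin.castLE hs_le i) ^ (j : ℕ) with hM
    have hMdet : IsUnit M.det := by
      have hMeq : M = (Matrix.vandermonde (fun i => α (Fin.castLE hs_le i)))ᵀ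
          * Matrix.diagonal (fun i => v (Fin.castLE hs_le i)) := by
        ext j i
        rw [Matrix.mul_diagonal]
        simp [Matrix.vandermonde, hM]
        ring
      rw [hMeq, Matrix.det_mul, Matrix.det_transpose, Matrix.det_vandermonde,
        Matrix.det_diagonal]
      apply IsUnit.mul <;> rw [isUnit_iff_ne_zero] <;>
        rw [Finset.prod_ne_zero_iff]
      · intro i _
        rw [Finset.prod_ne_zero_iff]
        intro j hj
        refine sub_ne_zero.mpr fun h => ?_
        have := hα h
        have : (j : ℕ) = (i : ℕ) := congrArg Fin.val (Fin.castLE_injective hs_le this)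
        have hji := Finset.mem_Ioi.mp hj
        omega
      · intro i _; exact hv _
    have hsurj : Function.Surjective Φ := by
      intro b
      refine ⟨fun i => if h : (i : ℕ) < s then M⁻¹.mulVec b ⟨i, h⟩ else 0, ?_⟩
      funext j
      rw [hΦapp]
      rw [sum_extend hs_le (fun i => v i * α i ^ (j : ℕ)) (M⁻¹.mulVec b)]
      have : ∑ i' : Fin s, v (Fin.castLE hs_le i') * α (Fin.castLE hs_le i') ^ (j : ℕ)
          * M⁻¹.mulVec b i' = M.mulVec (M⁻¹.mulVec b) j := by
        rw [Matrix.mulVec]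
        simp [dotProduct, hM]
      rw [this, Matrix.mulVec_mulVec, Matrix.mul_nonsing_inv _ hMdet, Matrix.one_mulVec]
    have hrank := LinearMap.finrank_range_add_finrank_ker Φ
    rw [LinearMap.range_eq_top.mpr hsurj] at hrank
    simp only [finrank_top, Module.finrank_pi, Fintype.card_fin] at hrank
    omega
  · constructor
    · -- existence of min weight codeword
      set Ψ : (Fin (s+1) → F) →ₗ[F] (Fin s → F) :=
      { toFun := fun c j => ∑ i' : Fin (s+1),
          v (Fin.castLE hsn i') * α (Fin.castLE hsn i') ^ (j : ℕ) * c i'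
        map_add' := by
          intro a b; funext j
          simp only [Pi.add_apply, mul_add, Finset.sum_add_distrib]
        map_smul' := by
          intro c a; funext j
          simp only [Pi.smul_apply, smul_eq_mul, RingHom.id_apply, Finset.mul_sum]
          apply Finset.sum_congr rfl
          intro i _; ring } with hΨ
      have hnotinj : ¬ Function.Injective Ψ := by
        intro hinj
        have := LinearMap.finrank_le_finrank_of_injective hinj
        simp only [Module.finrank_pi, Fintype.card_fin] at this
        omega
      have : ∃ c : Fin (s+1) → F, c ≠ 0 ∧ Ψ c = 0 := by
        rw [Function.not_injective_iff] at hnotinj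
        obtain ⟨a, b, hab, hne⟩ := hnotinj
        exact ⟨a - b, sub_ne_zero.mpr hne, by rw [map_sub, hab, sub_self]⟩
      obtain ⟨c, hc0, hcΨ⟩ := this
      set x : Fin n → F := fun i => if h : (i : ℕ) < s + 1 then c ⟨i, h⟩ else 0 with hxdef
      have hxC : x ∈ LinearMap.ker Φ := by
        rw [LinearMap.mem_ker]
        funext j
        rw [hΦapp, hxdef]
        rw [sum_extend hsn (fun i => v i * α i ^ (j : ℕ)) c]
        exact congrFun hcΨ j
      have hxne : x ≠ 0 := by
        obtain ⟨i', hi'⟩ := Function.ne_iff.mp hc0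
        intro h
        apply hi'
        have := congrFun h (Fin.castLE hsn i')
        simp only [hxdef, Pi.zero_apply] at this
        rw [dif_pos (by simpa using i'.2)] at this
        simpa using this
      have hwub : wt x ≤ s + 1 := by
        rw [wt_eq_card]
        have hsub : (Finset.univ.filter fun i => x i ≠ 0)
            ⊆ Finset.univ.map (Fin.castLEEmb hsn) := by
          intro i hi
          simp only [Finset.mem_filter] at hi
          have hlt : (i : ℕ) < s + 1 := by
            by_contra hge
            exact hi.2 (by rw [hxdef]; exact dif_neg hge)
          exact Finset.mem_map.mpr ⟨⟨i, hlt⟩, Finset.mem_univ _, Fin.ext rfl⟩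
        calc (Finset.univ.filter fun i => x i ≠ 0).card
            ≤ (Finset.univ.map (Fin.castLEEmb hsn)).card := Finset.card_le_card hsub
          _ = s + 1 := by simp
      have hwlb : ¬ wt x ≤ s := fun hle =>
        hxne (key_indep α v hα hv x ((hmemC x).mp hxC) hle)
      exact ⟨x, hxC, hxne, by omega⟩
    · -- lower bound
      rintro d ⟨x, hxC, hxne, rfl⟩
      by_contra hlt
      exact hxne (key_indep α v hα hv x ((hmemC x).mp hxC) (by omega))

open Finset in
/-- for t a positive divisor of q²−1, r ≤ (q²−1)/t and
s ≤ (t−1)/(q+1), there exist [n, n−s, s+1]_{q²} Hermitian dual-containing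
codes for both n = rt and n = rt + 1. -/
theorem stmt_13 (q : ℕ) (hpp : IsPrimePow q)
    (F : Type*) [Field F] [Fintype F] (hF : Fintype.card F = q ^ 2)
    (t : ℕ) (ht0 : 0 < t) (ht : t ∣ q ^ 2 - 1) (r s : ℕ) (hr1 : 1 ≤ r)
    (hr2 : r ≤ (q ^ 2 - 1) / t) (hs1 : 1 ≤ s) (hs2 : s ≤ (t - 1) / (q + 1)) :
    (∃ C : Submodule F (Fin (r * t) → F),
      dualH q (r * t) C ≤ C ∧
      Module.finrank F C = r * t - s ∧
      IsLeast {d : ℕ | ∃ x ∈ C, x ≠ 0 ∧ wt x = d} (s + 1)) ∧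
    (∃ C : Submodule F (Fin (r * t + 1) → F),
      dualH q (r * t + 1) C ≤ C ∧
      Module.finrank F C = r * t + 1 - s ∧
      IsLeast {d : ℕ | ∃ x ∈ C, x ≠ 0 ∧ wt x = d} (s + 1)) := by
  classical
  have hq2 : 2 ≤ q := hpp.two_le
  have hqq : q ^ 2 = q * q := sq q
  have hq4 : 4 ≤ q ^ 2 := by nlinarith
  set N := q ^ 2 - 1 with hN
  have hN0 : 0 < N := by omega
  have htN : t ≤ N := Nat.le_of_dvd hN0 ht
  have hstq : s * (q + 1) ≤ t - 1 := (Nat.le_div_iff_mul_le (by omega)).mp hs2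
  have hts : q + 2 ≤ t := by
    have h1 : 1 * (q + 1) ≤ s * (q + 1) := Nat.mul_le_mul_right _ hs1
    omega
  have hq3 : 3 ≤ q := by
    rcases Nat.lt_or_ge q 3 with h | h
    · have hq2' : q = 2 := by omega
      subst hq2'
      norm_num at hN
      omega
    · exact h
  set d := N / t with hd
  have hdt : d * t = N := Nat.div_mul_cancel ht
  have hrd : r ≤ d := hr2
  have hd0 : 0 < d := lt_of_lt_of_le hr1 hrd
  have hsnA : s + 1 ≤ r * t := by
    have h1 : s * 1 ≤ s * (q + 1) := Nat.mul_le_mul_left s (by omega)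
    have h2 : 1 * t ≤ r * t := Nat.mul_le_mul_right t hr1
    omega
  -- generator of the multiplicative group
  obtain ⟨g, hg⟩ := IsCyclic.exists_generator (α := Fˣ)
  have hcardU : Nat.card Fˣ = N := by
    rw [Nat.card_units, Nat.card_eq_fintype_card, hF]
  have horder : orderOf g = N := by
    rw [orderOf_eq_card_of_forall_mem_zpowers hg, hcardU]
  set G : F := (g : F) with hG
  have hGpow : ∀ m : ℕ, G ^ m = ((g ^ m : Fˣ) : F) :=
    fun m => (Units.val_pow_eq_pow_val g m).symm
  have hG1 : ∀ m : ℕ, (G ^ m = 1 ↔ N ∣ m) := by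
    intro m
    rw [hGpow, ← horder, orderOf_dvd_iff_pow_eq_one]
    constructor
    · intro h; exact Units.ext h
    · intro h; rw [h]; rfl
  have hGN : G ^ N = 1 := (hG1 N).mpr dvd_rfl
  have hGne : G ≠ 0 := Units.ne_zero g
  have hGinj : ∀ m m' : ℕ, m < N → m' < N → G ^ m = G ^ m' → m = m' := by
    intro m m' hm hm' h
    have h2 : g ^ m = g ^ m' := Units.ext (by rw [← hGpow, ← hGpow]; exact h)
    exact pow_injOn_Iio_orderOf (by rw [horder]; exact hm)
      (by rw [horder]; exact hm') h2
  -- inner geometric sum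
  have hinner : ∀ m : ℕ, 0 < m → m < t → ∑ b : Fin t, (G ^ (d * m)) ^ (b : ℕ) = 0 := by
    intro m hm0 hmt
    have hx1 : G ^ (d * m) ≠ 1 := by
      intro h1eq
      have hdvd := (hG1 _).mp h1eq
      have hlt : d * m < N := by
        rw [← hdt]
        exact Nat.mul_lt_mul_of_le_of_lt (le_refl d) hmt hd0
      have hpos : 0 < d * m := Nat.mul_pos hd0 hm0
      have := Nat.le_of_dvd hpos hdvd
      omega
    have hxt : (G ^ (d * m)) ^ t = 1 := by
      rw [← pow_mul, show d * m * t = N * m from by rw [← hdt]; ring, pow_mul, hGN, one_pow]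
    have h2 : (∑ i ∈ Finset.range t, (G ^ (d * m)) ^ i) * (G ^ (d * m) - 1) = 0 := by
      rw [geom_sum_mul, hxt, sub_self]
    rw [Fin.sum_univ_eq_sum_range]
    exact (mul_eq_zero.mp h2).resolve_right (sub_ne_zero.mpr hx1)
  -- full coset sums
  have hcoset : ∀ (w : Fin r → F) (m : ℕ), 0 < m → m < t →
      ∑ p : Fin r × Fin t, w p.1 * (G ^ ((p.1 : ℕ) + d * (p.2 : ℕ))) ^ m = 0 := by
    intro w m h0 hm
    rw [Fintype.sum_prod_type]
    apply Finset.sum_eq_zero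
    intro a _
    have hterm : ∀ b : Fin t, w a * (G ^ ((a : ℕ) + d * (b : ℕ))) ^ m
        = (w a * G ^ ((a : ℕ) * m)) * (G ^ (d * m)) ^ (b : ℕ) := by
      intro b
      rw [← pow_mul, ← pow_mul, mul_assoc, ← pow_add]
      congr 2
      ring
    simp_rw [hterm]
    rw [← Finset.mul_sum, hinner m h0 hm, mul_zero]
  -- the evaluation points
  set π := finProdFinEquiv (m := r) (n := t) with hπ
  set A : Fin r × Fin t → F := fun p => G ^ ((p.1 : ℕ) + d * (p.2 : ℕ)) with hA
  have hexplt : ∀ p : Fin r × Fin t, (p.1 : ℕ) + d * (p.2 : ℕ) < N := by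
    intro p
    have h1 : (p.1 : ℕ) < d := lt_of_lt_of_le p.1.2 hrd
    have h2 : d * (p.2 : ℕ) ≤ d * (t - 1) := Nat.mul_le_mul_left d (by omega)
    calc (p.1 : ℕ) + d * (p.2 : ℕ) < d + d * (p.2 : ℕ) := by omega
      _ ≤ d + d * (t - 1) := by omega
      _ = d * (1 + (t - 1)) := by ring
      _ = d * t := by congr 1; omega
      _ = N := hdt
  have hAinj : Function.Injective A := by
    intro p p' h
    have heq : (p.1 : ℕ) + d * (p.2 : ℕ) = (p'.1 : ℕ) + d * (p'.2 : ℕ) :=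
      hGinj _ _ (hexplt p) (hexplt p') h
    have h1 : (p.1 : ℕ) < d := lt_of_lt_of_le p.1.2 hrd
    have h1' : (p'.1 : ℕ) < d := lt_of_lt_of_le p'.1.2 hrd
    have hmod := congrArg (· % d) heq
    simp only [Nat.add_mul_mod_self_left] at hmod
    rw [Nat.mod_eq_of_lt h1, Nat.mod_eq_of_lt h1'] at hmod
    have h2 : d * (p.2 : ℕ) = d * (p'.2 : ℕ) := by omega
    have h3 : (p.2 : ℕ) = (p'.2 : ℕ) := Nat.eq_of_mul_eq_mul_left hd0 h2
    exact Prod.ext (Fin.ext hmod) (Fin.ext h3)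
  set α : Fin (r * t) → F := fun i => A (π.symm i) with hα
  have hαinj : Function.Injective α := hAinj.comp π.symm.injective
  have hαne : ∀ i, α i ≠ 0 := fun i => pow_ne_zero _ hGne
  -- bound on exponents
  have hexpbound : ∀ j k : ℕ, j < s → k < s → j * q + k < t := by
    intro j k hj hk
    have h1 : j * q ≤ (s - 1) * q := Nat.mul_le_mul_right q (by omega)
    have h2 : (s - 1) * q = s * q - q := by rw [Nat.sub_mul, one_mul]
    have h3 : s * (q + 1) = s * q + s := by ring
    have h4 : q ≤ s * q := Nat.le_mul_of_pos_left q (by omega)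
    omega
  -- Hermitian sums for case A
  have hhermA : ∀ j k : ℕ, j < s → k < s →
      ∑ i, (α i) ^ (q + 1) * (α i) ^ (j * q + k) = 0 := by
    intro j k hj hk
    have hsum : ∑ i, (α i) ^ (q + 1) * (α i) ^ (j * q + k)
        = ∑ p : Fin r × Fin t, (1 : F) * (A p) ^ ((q + 1) + (j * q + k)) := by
      rw [← Equiv.sum_comp π.symm
        (fun p => (1 : F) * (A p) ^ ((q + 1) + (j * q + k)))]
      apply Finset.sum_congr rfl
      intro i _
      rw [one_mul, ← pow_add]
    rw [hsum]
    have hm0 : 0 < (q + 1) + (j * q + k) := by omega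
    have hmt : (q + 1) + (j * q + k) < t := by
      have h1' : (j + 1) * q ≤ s * q := Nat.mul_le_mul_right q (by omega)
      have h3 : s * (q + 1) = s * q + s := by ring
      have h4 : (j + 1) * q = j * q + q := by ring
      omega
    exact hcoset (fun _ => 1) _ hm0 hmt
  refine ⟨construction q (r * t) s hF hsnA α α hαinj hαne hhermA, ?_⟩
  -- ===================== Case B : length r*t + 1 =====================
  -- characteristic
  obtain ⟨p0, a0, hp0, ha0, hq0⟩ := hpp
  haveI : CharP F (ringChar F) := ringChar.charP F
  obtain ⟨np, hpprime, hcardp⟩ := FiniteField.card F (ringChar F)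
  set p : ℕ := ringChar F with hpdef
  have hq2p : q ^ 2 = p ^ (np : ℕ) := by rw [← hF, hcardp]
  have hpp0 : p = p0 := by
    have h1 : p ∣ q ^ 2 := by
      rw [hq2p]; exact dvd_pow_self p (by positivity)
    have h2 : q ^ 2 = p0 ^ (2 * a0) := by rw [← hq0]; ring
    rw [h2] at h1
    have h3 : p ∣ p0 := hpprime.dvd_of_dvd_pow h1
    exact ((Nat.prime_dvd_prime_iff_eq hpprime hp0.nat_prime).mp h3)
  have hqpa : p ^ a0 = q := by rw [hpp0, hq0]
  haveI : Fact p.Prime := ⟨hpprime⟩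
  have hfrob : ∀ x y : F, (x + y) ^ q = x ^ q + y ^ q := by
    intro x y
    rw [← hqpa]
    exact add_pow_char_pow (p := p) (n := a0) (x := x) (y := y)
  have hnatq : ∀ m : ℕ, ((m : F)) ^ q = (m : F) := by
    intro m
    induction m with
    | zero => rw [Nat.cast_zero]; exact zero_pow (by omega)
    | succ k ih => push_cast; rw [hfrob, ih, one_pow]
  have hnegq : ∀ x : F, (-x) ^ q = - (x ^ q) := by
    intro x
    have h := hfrob (-x) x
    rw [show ((-x) + x : F) = 0 from by ring, zero_pow (show q ≠ 0 by omega)] at h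
    exact eq_neg_of_add_eq_zero_left h.symm
  -- the weights
  set u : F := if (r : F) = 0 then G else 1 with hu
  have hune : u ≠ 0 := by
    by_cases h : (r : F) = 0
    · rw [hu, if_pos h]; exact hGne
    · rw [hu, if_neg h]; exact one_ne_zero
  set W : F := u ^ (q + 1) with hW
  set S : F := W + ((r : F) - 1) with hS
  have hSne : S ≠ 0 := by
    by_cases h : (r : F) = 0
    · have hW' : W = G ^ (q + 1) := by rw [hW, hu, if_pos h]
      have hne1 : G ^ (q + 1) ≠ 1 := by
        intro h1
        have hdvd := (hG1 _).mp h1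
        have hle := Nat.le_of_dvd (by omega) hdvd
        have h3q : 3 * q ≤ q * q := Nat.mul_le_mul_right q hq3
        omega
      rw [hS, hW', h]
      intro heq
      exact hne1 (by linear_combination heq)
    · rw [hS, hW, hu, if_neg h, one_pow]
      intro heq
      exact h (by linear_combination heq)
  have htF : (t : F) ≠ 0 := by
    intro h0
    have hdvd : p ∣ t := (CharP.cast_eq_zero_iff F p t).mp h0
    have hdvdN : p ∣ N := hdvd.trans ht
    have hdvdq2 : p ∣ q ^ 2 := by
      rw [hq2p]; exact dvd_pow_self p (by positivity)
    have h1 : p ∣ q ^ 2 - N := Nat.dvd_sub hdvdq2 hdvdN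
    have h2 : q ^ 2 - N = 1 := by omega
    rw [h2] at h1
    exact hpprime.one_lt.ne' (Nat.dvd_one.mp h1)
  set Z : F := - ((t : F) * S) with hZ
  have hZne : Z ≠ 0 := by
    rw [hZ, neg_ne_zero]
    exact mul_ne_zero htF hSne
  have hZq : Z ^ q = Z := by
    rw [hZ, hnegq]
    congr 1
    rw [mul_pow, hnatq]
    congr 1
    have hWq : (u ^ (q + 1)) ^ q = u ^ (q + 1) := by
      rw [← pow_mul, show (q + 1) * q = q ^ 2 + q from by ring, pow_add, ← hF,
        FiniteField.pow_card, ← pow_succ']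
    rw [hS, hfrob, hW, hWq]
    congr 1
    rw [sub_eq_add_neg, hfrob, hnegq, one_pow, hnatq, ← sub_eq_add_neg]
  -- Z is a (q+1)-st power
  have hZunit : ∃ c : ℕ, (G ^ c) ^ (q + 1) = Z := by
    obtain ⟨zu, hzu⟩ := isUnit_iff_ne_zero.mpr hZne
    obtain ⟨k, hk⟩ := mem_powers_iff_mem_zpowers.mpr (hg zu)
    have hk' : g ^ k = zu := hk
    have hGk : G ^ k = Z := by rw [hGpow, hk', hzu]
    have hZq1 : Z ^ (q - 1) = 1 := by
      have h1 : Z ^ ((q - 1) + 1) = Z ^ (q - 1) * Z := pow_succ Z (q - 1)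
      rw [show (q - 1) + 1 = q from by omega, hZq] at h1
      exact mul_right_cancel₀ hZne (by rw [← h1, one_mul])
    have hdvd : N ∣ k * (q - 1) := by
      rw [← hG1, pow_mul, hGk, hZq1]
    have hNfact : (q + 1) * (q - 1) = N := by
      obtain ⟨q', rfl⟩ : ∃ q', q = q' + 1 := ⟨q - 1, by omega⟩
      have e1 : (q' + 1 + 1) * (q' + 1 - 1) = q' * q' + 2 * q' := by
        simp; ring
      have e2 : (q' + 1) ^ 2 = q' * q' + 2 * q' + 1 := by ring
      omega
    have hq1dvd : (q + 1) ∣ k := by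
      rw [← hNfact] at hdvd
      exact (Nat.mul_dvd_mul_iff_right (show 0 < q - 1 by omega)).mp hdvd
    obtain ⟨c, hc⟩ := hq1dvd
    refine ⟨c, ?_⟩
    rw [← pow_mul, mul_comm c (q + 1), ← hc, hGk]
  obtain ⟨ce, hce⟩ := hZunit
  set η : F := G ^ ce with hη
  have hηne : η ≠ 0 := pow_ne_zero _ hGne
  -- weight function on cosets
  haveI : NeZero r := ⟨by omega⟩
  set wA : Fin r → F := fun a => if a = 0 then u else 1 with hwA
  have hwAne : ∀ a, wA a ≠ 0 := by
    intro a
    simp only [hwA]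
    by_cases h : a = (0 : Fin r)
    · rw [if_pos h]; exact hune
    · rw [if_neg h]; exact one_ne_zero
  have hwAsum : ∑ a : Fin r, (wA a) ^ (q + 1) = (r : F) - 1 + W := by
    have hterm : ∀ a : Fin r, (wA a) ^ (q + 1)
        = (if a = 0 then W - 1 else 0) + 1 := by
      intro a
      simp only [hwA]
      by_cases h : a = (0 : Fin r)
      · rw [if_pos h, if_pos h, hW]; ring
      · rw [if_neg h, if_neg h, one_pow]; ring
    simp_rw [hterm]
    rw [Finset.sum_add_distrib, Finset.sum_ite_eq' Finset.univ (0 : Fin r)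
      (fun _ => W - 1), if_pos (Finset.mem_univ _)]
    simp [Finset.card_univ]
    ring
  -- points and weights of the extended code
  set αB : Fin (r * t + 1) → F := Fin.snoc α 0 with hαB
  set vB : Fin (r * t + 1) → F :=
    Fin.snoc (fun i => wA (π.symm i).1) η with hvB
  have hαBinj : Function.Injective αB := by
    intro i j hij
    rcases Fin.eq_castSucc_or_eq_last i with ⟨i', rfl⟩ | rfl <;>
      rcases Fin.eq_castSucc_or_eq_last j with ⟨j', rfl⟩ | rfl
    · rw [hαB, Fin.snoc_castSucc, Fin.snoc_castSucc] at hij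
      exact congrArg Fin.castSucc (hαinj hij)
    · rw [hαB, Fin.snoc_castSucc, Fin.snoc_last] at hij
      exact absurd hij (hαne i')
    · rw [hαB, Fin.snoc_castSucc, Fin.snoc_last] at hij
      exact absurd hij.symm (hαne j')
    · rfl
  have hvBne : ∀ i, vB i ≠ 0 := by
    intro i
    rcases Fin.eq_castSucc_or_eq_last i with ⟨i', rfl⟩ | rfl
    · rw [hvB, Fin.snoc_castSucc]; exact hwAne _
    · rw [hvB, Fin.snoc_last]; exact hηne
  have hhermB : ∀ j k : ℕ, j < s → k < s →
      ∑ i, (vB i) ^ (q + 1) * (αB i) ^ (j * q + k) = 0 := by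
    intro j k hj hk
    rw [Fin.sum_univ_castSucc]
    simp only [hvB, hαB, Fin.snoc_castSucc, Fin.snoc_last]
    by_cases hm : j * q + k = 0
    · rw [hm]
      simp only [pow_zero, mul_one]
      have h1 : ∑ i : Fin (r * t), (wA (π.symm i).1) ^ (q + 1)
          = ∑ pr : Fin r × Fin t, (wA pr.1) ^ (q + 1) := by
        rw [← Equiv.sum_comp π.symm (fun pr : Fin r × Fin t => (wA pr.1) ^ (q + 1))]
      have h2 : ∑ pr : Fin r × Fin t, (wA pr.1) ^ (q + 1)
          = (t : F) * ((r : F) - 1 + W) := by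
        rw [Fintype.sum_prod_type_right]
        have h4 : ∀ b : Fin t, ∑ a : Fin r, (wA a) ^ (q + 1)
            = (r : F) - 1 + W := fun _ => hwAsum
        calc ∑ b : Fin t, ∑ a : Fin r, (wA a) ^ (q + 1)
            = ∑ _b : Fin t, ((r : F) - 1 + W) := Finset.sum_congr rfl (fun b _ => h4 b)
          _ = (t : ℕ) • ((r : F) - 1 + W) := by
              rw [Finset.sum_const, Finset.card_univ, Fintype.card_fin]
          _ = (t : F) * ((r : F) - 1 + W) := nsmul_eq_mul t _
      rw [h1, h2]
      have h3 : η ^ (q + 1) = Z := hce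
      rw [h3, hZ, hS]
      ring
    · have hm0 : 0 < j * q + k := by omega
      rw [zero_pow (by omega), mul_zero, add_zero]
      have h1 : ∑ i : Fin (r * t), (wA (π.symm i).1) ^ (q + 1) * (α i) ^ (j * q + k)
          = ∑ pr : Fin r × Fin t, (wA pr.1) ^ (q + 1) * (A pr) ^ (j * q + k) := by
        rw [← Equiv.sum_comp π.symm
          (fun pr : Fin r × Fin t => (wA pr.1) ^ (q + 1) * (A pr) ^ (j * q + k))]
      rw [h1]
      exact hcoset (fun a => (wA a) ^ (q + 1)) _ hm0 (hexpbound j k hj hk)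
  have hsnB : s + 1 ≤ r * t + 1 := by omega
  exact construction q (r * t + 1) s hF hsnB αB vB hαBinj hvBne hhermB
end

section
/- Let q be a prime power and let 2 ≤ n ≤ q². Suppose n = n_1 + ⋯ + n_t with 1 ≤ t ≤ q and 2 ≤ n_i ≤ q for all 1 ≤ i ≤ t, and let s be an integer with 1 ≤ s ≤ min{n_1,…,n_t}/2. Then there exists a linear code C over 𝔽_{q²} of length n, dimension n − s, and minimum distance s + 1, such that C^{⊥H} ⊆ C. -/
section Aux14
open Polynomial Finset

lemma lagrange_sum_eq_zero {F : Type*} [Field F] {m : ℕ} (c : Fin m → F)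
    (hc : Function.Injective c) (d : ℕ) (hd : d + 2 ≤ m) :
    ∑ j, (∏ k ∈ Finset.univ.erase j, (c j - c k)⁻¹) * c j ^ d = 0 := by
  have hinj : Set.InjOn c (Finset.univ : Finset (Fin m)) := hc.injOn
  have hcard : (Finset.univ : Finset (Fin m)).card = m := by simp
  have hX : (X ^ d : F[X]) = Lagrange.interpolate Finset.univ c (fun j => c j ^ d) := by
    refine Lagrange.eq_interpolate_of_eval_eq _ hinj ?_ ?_
    · rw [hcard, degree_X_pow]
      exact_mod_cast by omega
    · intro i _; simp
  have h0 : (X ^ d : F[X]).coeff (m - 1) = 0 := by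
    rw [coeff_X_pow, if_neg (by omega)]
  rw [hX, Lagrange.interpolate_apply, finset_sum_coeff] at h0
  rw [← h0]
  apply Finset.sum_congr rfl
  intro j _
  rw [coeff_C_mul]
  have hb : (Lagrange.basis Finset.univ c j).coeff (m - 1)
      = ∏ k ∈ Finset.univ.erase j, (c j - c k)⁻¹ := by
    have hnd : (Lagrange.basis Finset.univ c j).natDegree = m - 1 := by
      rw [Lagrange.natDegree_basis hinj (Finset.mem_univ j), hcard]
    rw [← hnd, ← leadingCoeff]
    unfold Lagrange.basis
    rw [leadingCoeff_prod]
    apply Finset.prod_congr rfl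
    intro k hk
    have hne : c j ≠ c k := fun h => (Finset.mem_erase.1 hk).1.symm (hc h)
    rw [Lagrange.basisDivisor, leadingCoeff_mul, leadingCoeff_C,
      leadingCoeff_X_sub_C, mul_one]
  rw [hb]; ring


lemma vandermonde_kernel {F : Type*} [Field F] {N s : ℕ} (β : Fin N → F)
    (hβ : Function.Injective β) (w : Fin N → F) (hw : ∀ j, w j ≠ 0)
    (x : Fin N → F)
    (hx : ∀ i : Fin s, ∑ j, w j * β j ^ (i : ℕ) * x j = 0)
    (hsupp : Set.ncard {j | x j ≠ 0} ≤ s) : x = 0 := by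
  classical
  by_contra hx0
  obtain ⟨j₀, hj₀⟩ : ∃ j₀, x j₀ ≠ 0 := by
    by_contra h; push_neg at h; exact hx0 (funext fun j => h j)
  set S : Finset (Fin N) := Finset.univ.filter (fun j => x j ≠ 0) with hS
  have hScard : S.card ≤ s := by
    have : {j | x j ≠ 0}.ncard = S.card := by
      rw [hS]; rw [Set.ncard_eq_toFinset_card']; congr 1
      ext j; simp
    omega
  have hj₀S : j₀ ∈ S := by simp [hS, hj₀]
  set P : F[X] := ∏ k ∈ S.erase j₀, (X - C (β k)) with hP
  have hPdeg : P.natDegree < s := by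
    rw [hP, natDegree_prod _ _ (fun k _ => X_sub_C_ne_zero (β k))]
    simp only [natDegree_X_sub_C, Finset.sum_const, smul_eq_mul, mul_one]
    have := Finset.card_erase_of_mem hj₀S
    have hpos : 0 < S.card := Finset.card_pos.2 ⟨j₀, hj₀S⟩
    omega
  -- key sum
  have hkey : ∑ j, w j * x j * P.eval (β j) = 0 := by
    have hev : ∀ j, P.eval (β j) = ∑ d ∈ Finset.range s, P.coeff d * β j ^ d := by
      intro j
      rw [eval_eq_sum_range' (lt_of_lt_of_le hPdeg (le_refl s))]
    calc ∑ j, w j * x j * P.eval (β j)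
        = ∑ j, ∑ d ∈ Finset.range s, P.coeff d * (w j * β j ^ d * x j) := by
          refine Finset.sum_congr rfl fun j _ => ?_
          rw [hev j, Finset.mul_sum]
          refine Finset.sum_congr rfl fun d _ => by ring
      _ = ∑ d ∈ Finset.range s, P.coeff d * ∑ j, w j * β j ^ d * x j := by
          rw [Finset.sum_comm]
          refine Finset.sum_congr rfl fun d _ => by rw [Finset.mul_sum]
      _ = 0 := by
          refine Finset.sum_eq_zero fun d hd => ?_
          rw [hx ⟨d, Finset.mem_range.1 hd⟩, mul_zero]
  -- but the sum equals the j₀ term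
  have hsingle : ∑ j, w j * x j * P.eval (β j) = w j₀ * x j₀ * P.eval (β j₀) := by
    refine Finset.sum_eq_single j₀ ?_ (by simp)
    intro j _ hne
    by_cases hxj : x j = 0
    · rw [hxj]; ring
    · have hjS : j ∈ S.erase j₀ := Finset.mem_erase.2 ⟨hne, by simp [hS, hxj]⟩
      have : P.eval (β j) = 0 := by
        rw [hP, eval_prod]
        exact Finset.prod_eq_zero hjS (by simp)
      rw [this]; ring
  rw [hsingle] at hkey
  have hPne : P.eval (β j₀) ≠ 0 := by
    rw [hP, eval_prod]
    refine Finset.prod_ne_zero_iff.2 fun k hk => ?_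
    have : β j₀ ≠ β k := fun h => (Finset.mem_erase.1 hk).1 (hβ h).symm
    simpa using sub_ne_zero.2 this
  exact hPne (by
    rcases mul_eq_zero.1 hkey with h | h
    · rcases mul_eq_zero.1 h with h' | h'
      · exact absurd h' (hw j₀)
      · exact absurd h' hj₀
    · exact h)


variable {F : Type*} [Field F] [Fintype F] [DecidableEq F]

lemma card_root_le (f : F[X]) (hf : f ≠ 0) :
    (Finset.univ.filter fun x => f.eval x = 0).card ≤ f.natDegree := by
  refine le_trans (Finset.card_le_card ?_) ((Multiset.toFinset_card_le _).trans (f.card_roots' ))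
  intro x hx
  simp only [Finset.mem_filter] at hx
  simp [Multiset.mem_toFinset, mem_roots', hf, IsRoot, hx.2]

lemma Xq_sub_ne (q : ℕ) (hq2 : 2 ≤ q) (c : F) : ((X:F[X])^q - X - C c) ≠ 0 := by
  intro h
  have : ((X:F[X])^q - X - C c).coeff q = 0 := by rw [h]; simp
  rw [coeff_sub, coeff_sub, coeff_X_pow, if_pos rfl, coeff_X, if_neg (by omega), coeff_C,
    if_neg (by omega)] at this
  simp at this

lemma Xq_sub_natDegree (q : ℕ) (hq2 : 2 ≤ q) (c : F) :
    ((X:F[X])^q - X - C c).natDegree ≤ q := by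
  refine le_trans (natDegree_sub_le _ _) ?_
  simp only [max_le_iff]
  constructor
  · refine le_trans (natDegree_sub_le _ _) ?_
    simp only [natDegree_X_pow, natDegree_X, max_le_iff]; omega
  · simp only [natDegree_C]; omega

lemma Xpow_sub_C_ne (m : ℕ) (hm : 1 ≤ m) (c : F) : ((X:F[X])^m - C c) ≠ 0 := by
  intro h
  have : ((X:F[X])^m - C c).coeff m = 0 := by rw [h]; simp
  rw [coeff_sub, coeff_X_pow, if_pos rfl, coeff_C, if_neg (by omega)] at this
  simp at this

lemma Xpow_sub_C_natDegree (m : ℕ) (c : F) : ((X:F[X])^m - C c).natDegree ≤ m := by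
  refine le_trans (natDegree_sub_le _ _) ?_
  simp [natDegree_X_pow, natDegree_C]

section charstuff
variable (q p e : ℕ) (hp : p.Prime) (hq : p ^ e = q) (hq2 : 2 ≤ q) [CharP F p]
  (hF : Fintype.card F = q ^ 2)

include hp hq hq2 hF

lemma sigma_add (a b : F) : (a + b) ^ q = a ^ q + b ^ q := by
  haveI := Fact.mk hp
  rw [← hq]; exact add_pow_char_pow (R := F) (p := p) (n := e) (x := a) (y := b)

lemma sigma_sub (a b : F) : (a - b) ^ q = a ^ q - b ^ q := by
  haveI := Fact.mk hp
  rw [← hq]; exact sub_pow_char_pow (R := F) (p := p) (n := e) (x := a) (y := b)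

lemma pow_q_sq (a : F) : (a ^ q) ^ q = a := by
  rw [← pow_mul, ← sq, ← hF, FiniteField.pow_card]

lemma card_K : (Finset.univ.filter fun x : F => x ^ q = x).card = q := by
  set Kf := Finset.univ.filter fun x : F => x ^ q = x with hKf
  have hupper : Kf.card ≤ q := by
    have := card_root_le ((X:F[X])^q - X - C 0) (Xq_sub_ne q hq2 0)
    refine le_trans (le_trans (le_of_eq ?_) this) (Xq_sub_natDegree q hq2 0)
    congr 1; ext x; rw [hKf]; simp [sub_eq_zero]
  have hlower : q ≤ Kf.card := by
    set φ : F → F := fun x => x ^ q - x with hφ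
    set Im := Finset.univ.image φ with hIm
    have hfib : ∀ y ∈ Im, (Finset.univ.filter fun x => φ x = y).card ≤ Kf.card := by
      intro y hy
      obtain ⟨x₀, _, hx₀⟩ := Finset.mem_image.1 hy
      refine Finset.card_le_card_of_injOn (fun x => x - x₀) ?_ ?_
      · intro x hx
        simp only [Finset.mem_coe, Finset.mem_filter, Finset.mem_univ, true_and] at hx ⊢
        rw [hKf]
        simp only [Finset.mem_coe, Finset.mem_filter, Finset.mem_univ, true_and]
        rw [sigma_sub q p e hp hq hq2 hF]
        have h1 : x ^ q = x + y := by rw [← hx]; ring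
        have h2 : x₀ ^ q = x₀ + y := by rw [hφ] at hx₀; rw [← hx₀]; ring
        rw [h1, h2]; ring
      · intro a _ b _ hab
        exact sub_left_injective hab
    have hsum : Fintype.card F = ∑ y ∈ Im, (Finset.univ.filter fun x => φ x = y).card := by
      rw [← Finset.card_univ]
      exact Finset.card_eq_sum_card_image φ Finset.univ
    have hImle : Im.card ≤ q := by
      have hsub : Im ⊆ Finset.univ.filter fun y : F => y ^ q + y = 0 := by
        intro y hy
        obtain ⟨x, _, hx⟩ := Finset.mem_image.1 hy
        simp only [Finset.mem_filter, Finset.mem_univ, true_and]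
        rw [← hx, hφ]
        rw [sigma_sub q p e hp hq hq2 hF, ← pow_mul, pow_mul, pow_q_sq q p e hp hq hq2 hF]
        ring
      have hne : ((X:F[X])^q + X - C 0) ≠ 0 := by
        intro h
        have : ((X:F[X])^q + X - C 0).coeff q = 0 := by rw [h]; simp
        rw [coeff_sub, coeff_add, coeff_X_pow, if_pos rfl, coeff_X, if_neg (by omega), coeff_C,
          if_neg (by omega)] at this
        simp at this
      have h2 := card_root_le ((X:F[X])^q + X - C 0) hne
      have h3 : ((X:F[X])^q + X - C 0).natDegree ≤ q := by
        refine le_trans (natDegree_sub_le _ _) ?_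
        simp only [max_le_iff]
        constructor
        · refine le_trans (natDegree_add_le _ _) ?_
          simp only [natDegree_X_pow, natDegree_X, max_le_iff]; omega
        · simp only [natDegree_C]; omega
      refine le_trans (Finset.card_le_card ?_) (le_trans h2 h3)
      intro y hy
      have := hsub hy
      simp only [Finset.mem_filter, Finset.mem_univ, true_and] at this ⊢
      simp [this, sub_eq_zero]
    have : Fintype.card F ≤ Im.card * Kf.card := by
      rw [hsum]
      exact le_trans (Finset.sum_le_card_nsmul _ _ _ hfib) (by rw [smul_eq_mul])
    rw [hF] at this
    nlinarith [Finset.card_le_card (Finset.subset_univ Im), Fintype.card F, hImle]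
  omega
end charstuff


variable {F : Type*} [Field F] [Fintype F] [DecidableEq F]

lemma norm_surj (q : ℕ) (hq2 : 2 ≤ q) (hF : Fintype.card F = q ^ 2)
    (hsq : ∀ a : F, (a ^ q) ^ q = a)
    (hK : (Finset.univ.filter fun x : F => x ^ q = x).card = q)
    (u : F) (hu : u ^ q = u) (hu0 : u ≠ 0) : ∃ v : F, v ^ (q + 1) = u := by
  set Kf := Finset.univ.filter fun x : F => x ^ q = x with hKf
  set Kstar := Kf.erase 0 with hKstar
  have h0K : (0:F) ∈ Kf := by simp [hKf, zero_pow (by omega : q ≠ 0)]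
  have hKs : Kstar.card = q - 1 := by rw [hKstar, Finset.card_erase_of_mem h0K, hK]
  set D := Finset.univ.filter fun v : F => v ≠ 0 with hD
  have hDcard : D.card = q ^ 2 - 1 := by
    rw [hD, Finset.filter_ne', Finset.card_erase_of_mem (Finset.mem_univ 0),
      Finset.card_univ, hF]
  set Img := D.image (fun v => v ^ (q + 1)) with hImg
  have hsub : Img ⊆ Kstar := by
    intro y hy
    obtain ⟨v, hv, hvy⟩ := Finset.mem_image.1 hy
    rw [hD] at hv
    simp only [Finset.mem_filter, Finset.mem_univ, true_and] at hv
    rw [hKstar, Finset.mem_erase, hKf]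
    constructor
    · rw [← hvy]; exact pow_ne_zero _ hv
    · simp only [Finset.mem_filter, Finset.mem_univ, true_and]
      rw [← hvy]
      have h1 : (v ^ (q+1)) ^ q = (v ^ q) ^ q * v ^ q := by
        rw [← pow_mul, ← pow_mul, ← pow_add]; congr 1; ring
      rw [h1, hsq]
      rw [pow_succ]; ring
  have hfib : ∀ y ∈ Img, (D.filter fun v => v ^ (q + 1) = y).card ≤ q + 1 := by
    intro y _
    have hne : ((X:F[X])^(q+1) - C y) ≠ 0 := by
      intro h
      have : ((X:F[X])^(q+1) - C y).coeff (q+1) = 0 := by rw [h]; simp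
      rw [coeff_sub, coeff_X_pow, if_pos rfl, coeff_C, if_neg (by omega)] at this
      simp at this
    have h1 := card_root_le ((X:F[X])^(q+1) - C y) hne
    have h2 : ((X:F[X])^(q+1) - C y).natDegree ≤ q + 1 := by
      refine le_trans (natDegree_sub_le _ _) ?_
      simp only [natDegree_X_pow, natDegree_C, max_le_iff]; omega
    refine le_trans (Finset.card_le_card ?_) (le_trans h1 h2)
    intro v hv
    simp only [Finset.mem_filter] at hv ⊢
    refine ⟨Finset.mem_univ _, ?_⟩
    simp [hv.2, sub_eq_zero]
  have hsum : D.card = ∑ y ∈ Img, (D.filter fun v => v ^ (q + 1) = y).card :=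
    Finset.card_eq_sum_card_image _ D
  have hcnt : q ^ 2 - 1 ≤ Img.card * (q + 1) := by
    rw [← hDcard, hsum]
    exact le_trans (Finset.sum_le_card_nsmul _ _ _ hfib) (by rw [smul_eq_mul])
  have hImgge : q - 1 ≤ Img.card := by
    by_contra h
    push_neg at h
    have ha : Img.card + 2 ≤ q := by omega
    have h1 : q ^ 2 ≤ Img.card * (q + 1) + 1 := by omega
    nlinarith [mul_le_mul_left ha (q+1), h1]
  have heq : Img = Kstar := Finset.eq_of_subset_of_card_le hsub (by omega)
  have huK : u ∈ Kstar := by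
    rw [hKstar, Finset.mem_erase, hKf]
    exact ⟨hu0, by simp [hu]⟩
  rw [← heq] at huK
  obtain ⟨v, _, hv⟩ := Finset.mem_image.1 huK
  exact ⟨v, hv⟩

open Finset


variable {F : Type*} [Field F]

noncomputable def Lmap {N s : ℕ} (β w : Fin N → F) : (Fin N → F) →ₗ[F] (Fin s → F) where
  toFun x := fun i => ∑ j, w j * β j ^ (i : ℕ) * x j
  map_add' a b := by
    funext i
    simp only [Pi.add_apply, ← Finset.sum_add_distrib]
    exact Finset.sum_congr rfl fun j _ => by ring
  map_smul' c a := by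
    funext i
    simp only [Pi.smul_apply, RingHom.id_apply, smul_eq_mul, Finset.mul_sum]
    exact Finset.sum_congr rfl fun j _ => by ring

noncomputable def extZero {r N : ℕ} (ι : Fin r → Fin N) : (Fin r → F) →ₗ[F] (Fin N → F) where
  toFun y := fun j => ∑ k, if j = ι k then y k else 0
  map_add' a b := by
    funext j
    simp only [Pi.add_apply, ← Finset.sum_add_distrib]
    exact Finset.sum_congr rfl fun k _ => by split <;> simp
  map_smul' c a := by
    funext j
    simp only [Pi.smul_apply, RingHom.id_apply, smul_eq_mul, Finset.mul_sum]
    exact Finset.sum_congr rfl fun k _ => by split <;> simp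

lemma extZero_apply_inj {r N : ℕ} {ι : Fin r → Fin N} (hι : Function.Injective ι)
    (y : Fin r → F) (k : Fin r) : extZero ι y (ι k) = y k := by
  simp only [extZero, LinearMap.coe_mk, AddHom.coe_mk]
  rw [Finset.sum_eq_single k (fun k' _ hk' => by
    rw [if_neg (fun h => hk' (hι h.symm))]) (by simp)]
  simp

lemma extZero_supp {r N : ℕ} (ι : Fin r → Fin N) (y : Fin r → F) :
    {j | extZero ι y j ≠ 0} ⊆ Set.range ι := by
  intro j hj
  simp only [Set.mem_setOf_eq, extZero, LinearMap.coe_mk, AddHom.coe_mk] at hj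
  by_contra hjr
  apply hj
  refine Finset.sum_eq_zero fun k _ => ?_
  rw [if_neg]
  exact fun h => hjr ⟨k, h.symm⟩

lemma supp_ncard_le {r N : ℕ} (ι : Fin r → Fin N) (hι : Function.Injective ι) (y : Fin r → F) :
    Set.ncard {j | extZero ι y j ≠ 0} ≤ r := by
  refine le_trans (Set.ncard_le_ncard (extZero_supp ι y) (Set.toFinite _)) ?_
  rw [← Nat.card_coe_set_eq, Nat.card_range_of_injective hι, Nat.card_eq_fintype_card,
    Fintype.card_fin]

lemma finrank_ker_Lmap {N s : ℕ} (hsN : s ≤ N) (β : Fin N → F) (hβ : Function.Injective β)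
    (w : Fin N → F) (hw : ∀ j, w j ≠ 0) :
    Module.finrank F (LinearMap.ker (Lmap (s := s) β w)) = N - s := by
  classical
  set L := Lmap (s := s) β w with hL
  have hsurj : Function.Surjective L := by
    set ι : Fin s → Fin N := Fin.castLE hsN with hι
    have hιinj : Function.Injective ι := Fin.castLE_injective hsN
    set M : (Fin s → F) →ₗ[F] (Fin s → F) := L ∘ₗ extZero ι with hM
    have hMinj : Function.Injective M := by
      rw [← LinearMap.ker_eq_bot]
      rw [LinearMap.ker_eq_bot']
      intro y hy
      have hx : extZero ι y = 0 := by
        refine vandermonde_kernel β hβ w hw _ (fun i => ?_) (supp_ncard_le ι hιinj y)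
        have := congrFun hy i
        simpa [hM, hL, Lmap] using this
      funext k
      have := congrFun hx (ι k)
      rw [extZero_apply_inj hιinj] at this
      simpa using this
    have hMsurj : Function.Surjective M := LinearMap.injective_iff_surjective.1 hMinj
    intro z
    obtain ⟨y, hy⟩ := hMsurj z
    exact ⟨extZero ι y, hy⟩
  have hrn := LinearMap.finrank_range_add_finrank_ker L
  rw [LinearMap.range_eq_top.2 hsurj, finrank_top] at hrn
  simp only [Module.finrank_pi, Fintype.card_fin] at hrn
  omega

lemma exists_low_weight {N s : ℕ} (hsN : s + 1 ≤ N) (β : Fin N → F) (hβ : Function.Injective β)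
    (w : Fin N → F) (hw : ∀ j, w j ≠ 0) :
    ∃ x : Fin N → F, x ∈ LinearMap.ker (Lmap (s := s) β w) ∧ x ≠ 0 ∧
      Set.ncard {j | x j ≠ 0} = s + 1 := by
  classical
  set L := Lmap (s := s) β w with hL
  set ι : Fin (s+1) → Fin N := Fin.castLE hsN with hι
  have hιinj : Function.Injective ι := Fin.castLE_injective hsN
  set M : (Fin (s+1) → F) →ₗ[F] (Fin s → F) := L ∘ₗ extZero ι with hM
  have hMninj : ¬ Function.Injective M := by
    intro h
    have := LinearMap.finrank_le_finrank_of_injective h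
    simp only [Module.finrank_pi, Fintype.card_fin] at this
    omega
  rw [← LinearMap.ker_eq_bot] at hMninj
  obtain ⟨y, hyker, hy0⟩ := Submodule.exists_mem_ne_zero_of_ne_bot hMninj
  refine ⟨extZero ι y, ?_, ?_, ?_⟩
  · simpa [hM] using hyker
  · intro h
    apply hy0
    funext k
    have := congrFun h (ι k)
    rw [extZero_apply_inj hιinj] at this
    simpa using this
  · have hle : Set.ncard {j | extZero ι y j ≠ 0} ≤ s + 1 := supp_ncard_le ι hιinj y
    have hgt : ¬ Set.ncard {j | extZero ι y j ≠ 0} ≤ s := by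
      intro hcon
      have hx : extZero ι y = 0 := by
        refine vandermonde_kernel β hβ w hw _ (fun i => ?_) hcon
        have : M y = 0 := hyker
        have := congrFun this i
        simpa [hM, hL, Lmap] using this
      apply hy0
      funext k
      have := congrFun hx (ι k)
      rw [extZero_apply_inj hιinj] at this
      simpa using this
    omega


lemma block_orth {F : Type*} [Field F] {q m : ℕ} (hm2 : 2 ≤ m) (c : Fin m → F)
    (hcinj : Function.Injective c) (hcK : ∀ x, (c x) ^ q = c x)
    (hadd : ∀ a b : F, (a + b) ^ q = a ^ q + b ^ q)
    (b1 : F) (i i' : ℕ) (hii' : i + i' + 2 ≤ m) :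
    ∑ x, (∏ x' ∈ Finset.univ.erase x, (c x - c x')⁻¹) *
      ((b1 + c x) ^ i * ((b1 + c x) ^ q) ^ i') = 0 := by
  set P : F[X] := (C b1 + X) ^ i * (C (b1 ^ q) + X) ^ i' with hP
  have hb : ∀ x, (b1 + c x) ^ q = b1 ^ q + c x := fun x => by rw [hadd, hcK]
  have hev : ∀ x, P.eval (c x) = (b1 + c x) ^ i * ((b1 + c x) ^ q) ^ i' := by
    intro x
    rw [hb x, hP]
    simp [eval_mul, eval_pow, eval_add]
  have hdeg1 : (C b1 + X : F[X]).natDegree ≤ 1 := by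
    refine le_trans (natDegree_add_le _ _) ?_
    simp [natDegree_C, natDegree_X]
  have hdeg2 : (C (b1 ^ q) + X : F[X]).natDegree ≤ 1 := by
    refine le_trans (natDegree_add_le _ _) ?_
    simp [natDegree_C, natDegree_X]
  have hdeg : P.natDegree < m - 1 := by
    have h1 : ((C b1 + X : F[X]) ^ i).natDegree ≤ i := by
      refine le_trans (natDegree_pow_le) ?_
      calc i * (C b1 + X : F[X]).natDegree ≤ i * 1 := Nat.mul_le_mul_left _ hdeg1
        _ = i := by ring
    have h2 : ((C (b1 ^ q) + X : F[X]) ^ i').natDegree ≤ i' := by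
      refine le_trans (natDegree_pow_le) ?_
      calc i' * (C (b1 ^ q) + X : F[X]).natDegree ≤ i' * 1 := Nat.mul_le_mul_left _ hdeg2
        _ = i' := by ring
    have := natDegree_mul_le (p := (C b1 + X : F[X]) ^ i) (q := (C (b1 ^ q) + X : F[X]) ^ i')
    rw [hP]
    omega
  calc ∑ x, (∏ x' ∈ Finset.univ.erase x, (c x - c x')⁻¹) *
        ((b1 + c x) ^ i * ((b1 + c x) ^ q) ^ i')
      = ∑ x, ∑ d ∈ Finset.range (m - 1),
          P.coeff d * ((∏ x' ∈ Finset.univ.erase x, (c x - c x')⁻¹) * c x ^ d) := by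
        refine Finset.sum_congr rfl fun x _ => ?_
        rw [← hev x, eval_eq_sum_range' hdeg, Finset.mul_sum]
        exact Finset.sum_congr rfl fun d _ => by ring
    _ = ∑ d ∈ Finset.range (m - 1),
          P.coeff d * ∑ x, (∏ x' ∈ Finset.univ.erase x, (c x - c x')⁻¹) * c x ^ d := by
        rw [Finset.sum_comm]
        exact Finset.sum_congr rfl fun d _ => by rw [Finset.mul_sum]
    _ = 0 := by
        refine Finset.sum_eq_zero fun d hd => ?_
        rw [lagrange_sum_eq_zero c hcinj d (by have := Finset.mem_range.1 hd; omega), mul_zero]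


lemma char_setup (q : ℕ) (hpp : IsPrimePow q) (F : Type*) [Field F] [Fintype F]
    (hF : Fintype.card F = q ^ 2) : ∃ p e, p.Prime ∧ CharP F p ∧ p ^ e = q := by
  obtain ⟨p₀, e₀, hp₀, he₀, hq₀⟩ := hpp
  have hp₀' : Nat.Prime p₀ := Nat.prime_iff.mpr hp₀
  set r := ringChar F with hr
  haveI : CharP F r := ringChar.charP F
  obtain ⟨n, hrp, hcard⟩ := FiniteField.card F r
  have hpow : r ^ (n : ℕ) = p₀ ^ (2 * e₀) := by
    rw [← hcard, hF, ← hq₀, ← pow_mul, mul_comm]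
  have hdvd : r ∣ p₀ ^ (2 * e₀) := by
    rw [← hpow]
    exact dvd_pow_self r (by positivity : (0:ℕ) < (n:ℕ)).ne'
  have hre : r = p₀ := (Nat.prime_dvd_prime_iff_eq hrp hp₀').1 (hrp.dvd_of_dvd_pow hdvd)
  exact ⟨p₀, e₀, hp₀', hre ▸ ‹CharP F r›, hq₀⟩

end Aux14
section Main14

lemma mem_dualH {F : Type*} [Field F] {q n : ℕ} (C : Submodule F (Fin n → F)) (x : Fin n → F) :
    x ∈ dualH q n C ↔ ∀ y ∈ C, ∑ i, x i * (y i) ^ q = 0 := Iff.rfl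

lemma mem_dualH_span {F : Type*} [Field F] {q n : ℕ} (hq0 : q ≠ 0)
    (hadd : ∀ a b : F, (a + b) ^ q = a ^ q + b ^ q) (S : Set (Fin n → F)) (x : Fin n → F) :
    x ∈ dualH q n (Submodule.span F S) ↔ ∀ y ∈ S, ∑ i, x i * (y i) ^ q = 0 := by
  rw [mem_dualH]
  constructor
  · intro h y hy; exact h y (Submodule.subset_span hy)
  · intro h y hy
    induction hy using Submodule.span_induction with
    | mem z hz => exact h z hz
    | zero => simp [zero_pow hq0]
    | add a b ha hb iha ihb =>
        calc ∑ i, x i * ((a + b) i) ^ q = ∑ i, (x i * (a i) ^ q + x i * (b i) ^ q) := by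
              refine Finset.sum_congr rfl fun i _ => ?_
              rw [Pi.add_apply, hadd]; ring
          _ = 0 := by rw [Finset.sum_add_distrib, iha, ihb, add_zero]
    | smul c a ha iha =>
        calc ∑ i, x i * ((c • a) i) ^ q = c ^ q * ∑ i, x i * (a i) ^ q := by
              rw [Finset.mul_sum]
              refine Finset.sum_congr rfl fun i _ => ?_
              rw [Pi.smul_apply, smul_eq_mul, mul_pow]; ring
          _ = 0 := by rw [iha, mul_zero]

/-- for 2 ≤ n ≤ q², writing n = n₁ + ⋯ + n_t with 1 ≤ t ≤ q and
2 ≤ nᵢ ≤ q, and 1 ≤ s ≤ min{n₁,…,n_t}/2, there exists an [n, n−s, s+1]_{q²}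
Hermitian dual-containing code. -/
theorem stmt_14 (q : ℕ) (hpp : IsPrimePow q)
    (F : Type*) [Field F] [Fintype F] (hF : Fintype.card F = q ^ 2)
    (n : ℕ) (hn2 : 2 ≤ n) (hnq : n ≤ q ^ 2) (t : ℕ) (ht1 : 1 ≤ t) (ht2 : t ≤ q)
    (ni : Fin t → ℕ) (hni2 : ∀ i, 2 ≤ ni i) (hniq : ∀ i, ni i ≤ q)
    (hsum : n = ∑ i, ni i) (s : ℕ) (hs1 : 1 ≤ s) (hs2 : ∀ i, s ≤ ni i / 2) :
    ∃ C : Submodule F (Fin (n) → F),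
      dualH q (n) C ≤ C ∧
      Module.finrank F C = (n) - s ∧
      IsLeast {d : ℕ | ∃ x ∈ C, x ≠ 0 ∧ wt x = d} (s + 1) := by
  classical
  obtain ⟨p, e, hp, hchar, hq⟩ := char_setup q hpp F hF
  haveI : CharP F p := hchar
  have hq2 : 2 ≤ q := hpp.two_le
  have hq0 : q ≠ 0 := by omega
  -- power facts
  have hadd : ∀ a b : F, (a + b) ^ q = a ^ q + b ^ q := fun a b =>
    sigma_add q p e hp hq hq2 hF a b
  have hsub : ∀ a b : F, (a - b) ^ q = a ^ q - b ^ q := fun a b =>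
    sigma_sub q p e hp hq hq2 hF a b
  have hsqF : ∀ a : F, (a ^ q) ^ q = a := fun a => pow_q_sq q p e hp hq hq2 hF a
  have hKcard : (Finset.univ.filter fun x : F => x ^ q = x).card = q :=
    card_K q p e hp hq hq2 hF
  set Kf := Finset.univ.filter fun x : F => x ^ q = x with hKf
  -- enumeration of K
  set g : Fin q → F := fun k => ((Kf.equivFin).symm (Fin.cast hKcard.symm k) : F) with hg
  have hginj : Function.Injective g := by
    intro a a' h
    have := Subtype.coe_injective h
    have := (Kf.equivFin).symm.injective this
    simpa [Fin.ext_iff] using congrArg Fin.val this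
  have hgK : ∀ k, (g k) ^ q = g k := by
    intro k
    have : (g k) ∈ Kf := ((Kf.equivFin).symm _).2
    simpa [hKf, Finset.mem_filter] using this
  -- the additive subgroup K
  set KA : AddSubgroup F :=
    { carrier := {x : F | x ^ q = x}
      add_mem' := by intro a b ha hb; simp only [Set.mem_setOf_eq] at *; rw [hadd, ha, hb]
      zero_mem' := by simp [zero_pow hq0]
      neg_mem' := by
        intro a ha
        simp only [Set.mem_setOf_eq] at *
        have : (0 - a) ^ q = 0 ^ q - a ^ q := hsub 0 a
        simpa [zero_pow hq0, ha] using this } with hKA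
  have hKAcard : Nat.card KA = q := by
    have hset : (KA : Set F) = ↑Kf := by
      ext x; simp [hKA, hKf]
    calc Nat.card KA = Nat.card (KA : Set F) := rfl
      _ = (KA : Set F).ncard := Nat.card_coe_set_eq _
      _ = Kf.card := by rw [hset, Set.ncard_coe_finset]
      _ = q := hKcard
  have hQcardN : Nat.card (F ⧸ KA) = q := by
    have h1 : Nat.card F = Nat.card (F ⧸ KA) * Nat.card KA :=
      AddSubgroup.card_eq_card_quotient_mul_card_addSubgroup KA
    have h2 : Nat.card F = q ^ 2 := by rw [Nat.card_eq_fintype_card, hF]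
    rw [hKAcard, h2] at h1
    have : q * q = Nat.card (F ⧸ KA) * q := by rw [← h1]; ring
    have hqpos : 0 < q := by omega
    exact (Nat.eq_of_mul_eq_mul_right hqpos this).symm
  haveI : Fintype (F ⧸ KA) := Fintype.ofFinite _
  have hQcard : Fintype.card (F ⧸ KA) = q := by
    rw [← Nat.card_eq_fintype_card]; exact hQcardN
  obtain ⟨embt⟩ : Nonempty (Fin t ↪ F ⧸ KA) :=
    Function.Embedding.nonempty_of_card_le (by simp [hQcard]; omega)
  set b : Fin t → F := fun i => Quotient.out (embt i) with hbdef
  have hb : ∀ i, ((b i : F) : F ⧸ KA) = embt i := fun i => QuotientAddGroup.out_eq' _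
  have hbne : ∀ i i', i ≠ i' → ¬ ((b i - b i') ^ q = b i - b i') := by
    intro i i' hne hmem
    have hKmem : b i - b i' ∈ KA := hmem
    have : ((b i : F) : F ⧸ KA) = ((b i' : F) : F ⧸ KA) := by
      rw [QuotientAddGroup.eq_iff_sub_mem]
      exact hKmem
    rw [hb, hb] at this
    exact hne (embt.injective this)
  -- sigma indexing
  have hcardA : Fintype.card (Σ i : Fin t, Fin (ni i)) = n := by
    rw [Fintype.card_sigma]
    simp [← hsum]
  set E : Fin n ≃ (Σ i : Fin t, Fin (ni i)) := (Fintype.equivFinOfCardEq hcardA).symm with hE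
  -- in-block nodes
  set cv : ∀ i : Fin t, Fin (ni i) → F := fun i x => g (Fin.castLE (hniq i) x) with hcv
  have hcvinj : ∀ i, Function.Injective (cv i) := fun i =>
    hginj.comp (Fin.castLE_injective (hniq i))
  have hcvK : ∀ i x, (cv i x) ^ q = cv i x := fun i x => hgK _
  -- nodes, weights, multipliers
  set β' : (Σ i : Fin t, Fin (ni i)) → F := fun a => b a.1 + cv a.1 a.2 with hβ'
  have hβ'inj : Function.Injective β' := by
    rintro ⟨i, x⟩ ⟨i', x'⟩ h
    simp only [hβ'] at h
    by_cases hii : i = i'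
    · subst hii
      have hcc : cv i x = cv i x' := by
        have := add_left_cancel h
        exact this
      have := hcvinj i hcc
      subst this; rfl
    · exfalso
      apply hbne i i' hii
      have hdiff : b i - b i' = cv i' x' - cv i x := by linear_combination h
      rw [hdiff, hsub, hcvK, hcvK]
  set u' : (Σ i : Fin t, Fin (ni i)) → F :=
    fun a => ∏ x' ∈ Finset.univ.erase a.2, (cv a.1 a.2 - cv a.1 x')⁻¹ with hu'
  have hu'0 : ∀ a, u' a ≠ 0 := by
    rintro ⟨i, x⟩ h
    simp only [hu'] at h
    rw [Finset.prod_eq_zero_iff] at h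
    obtain ⟨x', hx', hz⟩ := h
    have : cv i x ≠ cv i x' := fun hcc =>
      (Finset.mem_erase.1 hx').1 (hcvinj i hcc).symm
    exact (inv_ne_zero (sub_ne_zero.2 this)) hz
  have hu'K : ∀ a, (u' a) ^ q = u' a := by
    rintro ⟨i, x⟩
    simp only [hu']
    rw [← Finset.prod_pow]
    refine Finset.prod_congr rfl fun x' _ => ?_
    rw [inv_pow, hsub, hcvK, hcvK]
  have hnorm : ∀ a, ∃ v : F, v ^ (q + 1) = u' a := fun a =>
    norm_surj q hq2 hF hsqF hKcard (u' a) (hu'K a) (hu'0 a)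
  choose v' hv' using hnorm
  have hv'0 : ∀ a, v' a ≠ 0 := by
    intro a h
    apply hu'0 a
    rw [← hv' a, h, zero_pow (by omega : q + 1 ≠ 0)]
  -- transported to Fin n
  set β : Fin n → F := fun j => β' (E j) with hβd
  set v : Fin n → F := fun j => v' (E j) with hvd
  have hβinj : Function.Injective β := hβ'inj.comp E.injective
  set w : Fin n → F := fun j => (v j) ^ q with hwd
  set γ : Fin n → F := fun j => (β j) ^ q with hγd
  have hw0 : ∀ j, w j ≠ 0 := fun j => pow_ne_zero _ (hv'0 _)
  have hγinj : Function.Injective γ := by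
    intro j j' h
    apply hβinj
    have : (β j - β j') ^ q = 0 := by rw [hsub]; simp only [hγd] at h; rw [h, sub_self]
    have := pow_eq_zero_iff (n := q) hq0 |>.1 this
    exact sub_eq_zero.1 this
  -- rows and code
  set r : Fin s → (Fin n → F) := fun i j => v j * β j ^ (i : ℕ) with hr
  set D := Submodule.span F (Set.range r) with hD
  set Cc := dualH q n D with hCc
  -- size facts
  have hblock : 2 * s ≤ ni ⟨0, ht1⟩ := by have := hs2 ⟨0, ht1⟩; omega
  have hni0n : ni ⟨0, ht1⟩ ≤ n := by
    rw [hsum]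
    exact Finset.single_le_sum (fun i _ => Nat.zero_le _) (Finset.mem_univ _)
  have hs1n : s + 1 ≤ n := by omega
  -- orthogonality of rows
  have horth : ∀ i i' : Fin s, ∑ j, r i j * (r i' j) ^ q = 0 := by
    intro i i'
    have hterm : ∀ a : (Σ i : Fin t, Fin (ni i)),
        v' a * β' a ^ (i : ℕ) * (v' a * β' a ^ (i' : ℕ)) ^ q
        = u' a * ((b a.1 + cv a.1 a.2) ^ (i : ℕ) * ((b a.1 + cv a.1 a.2) ^ q) ^ (i' : ℕ)) := by
      intro a
      rw [mul_pow, ← pow_right_comm (β' a)]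
      have hvv : v' a * (v' a) ^ q = u' a := by
        rw [← hv' a, pow_succ, mul_comm]
      calc v' a * β' a ^ (i : ℕ) * ((v' a) ^ q * ((β' a) ^ q) ^ (i' : ℕ))
          = (v' a * (v' a) ^ q) * (β' a ^ (i : ℕ) * ((β' a) ^ q) ^ (i' : ℕ)) := by ring
        _ = u' a * ((b a.1 + cv a.1 a.2) ^ (i : ℕ) * ((b a.1 + cv a.1 a.2) ^ q) ^ (i' : ℕ)) := by
            rw [hvv, hβ']
    calc ∑ j, r i j * (r i' j) ^ q
        = ∑ j, (fun a => u' a * ((b a.1 + cv a.1 a.2) ^ (i : ℕ)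
            * ((b a.1 + cv a.1 a.2) ^ q) ^ (i' : ℕ))) (E j) := by
          refine Finset.sum_congr rfl fun j _ => ?_
          simp only [hr, hβd, hvd]
          exact hterm (E j)
      _ = ∑ a : (Σ i : Fin t, Fin (ni i)), u' a * ((b a.1 + cv a.1 a.2) ^ (i : ℕ)
            * ((b a.1 + cv a.1 a.2) ^ q) ^ (i' : ℕ)) := Fintype.sum_equiv E _ _ (fun j => rfl)
      _ = ∑ i0 : Fin t, ∑ x : Fin (ni i0), u' ⟨i0, x⟩ * ((b i0 + cv i0 x) ^ (i : ℕ)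
            * ((b i0 + cv i0 x) ^ q) ^ (i' : ℕ)) := by
          rw [← Finset.univ_sigma_univ, Finset.sum_sigma]
      _ = 0 := by
          refine Finset.sum_eq_zero fun i0 _ => ?_
          have hii' : (i : ℕ) + (i' : ℕ) + 2 ≤ ni i0 := by
            have h1 := i.isLt
            have h2 := i'.isLt
            have := hs2 i0
            omega
          have := block_orth (hni2 i0) (cv i0) (hcvinj i0) (hcvK i0) hadd (b i0)
            (i : ℕ) (i' : ℕ) hii'
          calc ∑ x : Fin (ni i0), u' ⟨i0, x⟩ * ((b i0 + cv i0 x) ^ (i : ℕ)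
                * ((b i0 + cv i0 x) ^ q) ^ (i' : ℕ))
              = ∑ x : Fin (ni i0), (∏ x' ∈ Finset.univ.erase x, (cv i0 x - cv i0 x')⁻¹) *
                ((b i0 + cv i0 x) ^ (i : ℕ) * ((b i0 + cv i0 x) ^ q) ^ (i' : ℕ)) := rfl
            _ = 0 := this
  -- membership characterization
  have hmemC : ∀ x, x ∈ Cc ↔ ∀ i : Fin s, ∑ j, x j * (r i j) ^ q = 0 := by
    intro x
    rw [hCc, hD, mem_dualH_span hq0 hadd]
    constructor
    · intro h i; exact h (r i) ⟨i, rfl⟩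
    · rintro h y ⟨i, rfl⟩; exact h i
  have hterm2 : ∀ (i : Fin s) (j : Fin n), (r i j) ^ q = w j * γ j ^ (i : ℕ) := by
    intro i j
    simp only [hr, hwd, hγd]
    rw [mul_pow, ← pow_right_comm]
  have hCker : Cc = LinearMap.ker (Lmap (s := s) γ w) := by
    ext x
    rw [hmemC, LinearMap.mem_ker]
    constructor
    · intro h
      funext i
      show ∑ j, w j * γ j ^ (i : ℕ) * x j = 0
      rw [← h i]
      refine Finset.sum_congr rfl fun j _ => ?_
      rw [hterm2 i j]; ring
    · intro h i
      have := congrFun h i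
      simp only [Pi.zero_apply] at this
      rw [← this]
      refine Finset.sum_congr rfl fun j _ => ?_
      rw [hterm2 i j]; ring
  refine ⟨Cc, ?_, ?_, ?_, ?_⟩
  · -- dual containment
    have hDC : D ≤ Cc := by
      rw [hD, Submodule.span_le]
      rintro _ ⟨i, rfl⟩
      rw [SetLike.mem_coe, hmemC]
      intro i'
      exact horth i i'
    intro x hx
    rw [hCc, mem_dualH]
    intro y hy
    exact hx y (hDC hy)
  · rw [hCker]
    exact finrank_ker_Lmap (by omega) γ hγinj w hw0
  · -- membership of s+1
    obtain ⟨x, hker, hx0, hcard⟩ := exists_low_weight hs1n γ hγinj w hw0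
    refine ⟨x, ?_, hx0, ?_⟩
    · rw [hCker]; exact hker
    · show Set.ncard {j | x j ≠ 0} = s + 1
      exact hcard
  · -- lower bound
    rintro d ⟨x, hxC, hx0, hwt⟩
    by_contra hcon
    push_neg at hcon
    apply hx0
    refine vandermonde_kernel (s := s) γ hγinj w hw0 x ?_ ?_
    · intro i
      rw [hCker, LinearMap.mem_ker] at hxC
      have := congrFun hxC i
      simpa [Lmap] using this
    · have : wt x = d := hwt
      rw [show wt x = Set.ncard {j | x j ≠ 0} from rfl] at this
      omega
end Main14
end
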